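/- Let f : ℝⁿ → ℝ ∪ {±∞} be a convex function, let x be a point where f is finite, and suppose ∂f(x) is nonempty. Then ri ∂f(x) = {v ∈ ℝⁿ : (v, −1) ∈ ri N_{epi f}(x, f(x))}. -/

import Mathlib

open MeasureTheory Set

/-- The convex subdifferential of an extended-real-valued function `f` at a point `x`. -/
noncomputable def subdiff {n : ℕ} (f : EuclideanSpace ℝ (Fin n) → EReal)
    (x : EuclideanSpace ℝ (Fin n)) : Set (EuclideanSpace ℝ (Fin n)) :=
  {v | f x ≠ ⊤ ∧ f x ≠ ⊥ ∧ ∀ y, f x + ((inner ℝ v (y - x) : ℝ) : EReal) ≤ f y}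

/-- The normal cone to a set `S ⊆ ℝⁿ × ℝ` at a point `p ∈ S` (inner product on `ℝⁿ × ℝ`
taken componentwise). -/
def normalConeProd {n : ℕ} (S : Set (EuclideanSpace ℝ (Fin n) × ℝ))
    (p : EuclideanSpace ℝ (Fin n) × ℝ) : Set (EuclideanSpace ℝ (Fin n) × ℝ) :=
  {w | ∀ q ∈ S, (inner ℝ w.1 (q.1 - p.1) : ℝ) + w.2 * (q.2 - p.2) ≤ 0}

section RiChar

variable {E : Type*} [NormedAddCommGroup E] [NormedSpace ℝ E]


variable {E : Type*} [NormedAddCommGroup E] [NormedSpace ℝ E]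

lemma mem_ri_iff {C : Set E} {z : E} :
    z ∈ intrinsicInterior ℝ C ↔ z ∈ affineSpan ℝ C ∧
      ∃ ε : ℝ, 0 < ε ∧ ∀ q, q ∈ affineSpan ℝ C → dist q z < ε → q ∈ C := by
  rw [mem_intrinsicInterior]
  constructor
  · rintro ⟨y, hy, rfl⟩
    refine ⟨y.2, ?_⟩
    rcases Metric.mem_nhds_iff.1 (mem_interior_iff_mem_nhds.1 hy) with ⟨ε, hε, hball⟩
    refine ⟨ε, hε, fun q hq hd => ?_⟩
    have : (⟨q, hq⟩ : affineSpan ℝ C) ∈ Metric.ball y ε := by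
      simpa [Metric.mem_ball, Subtype.dist_eq] using hd
    exact hball this
  · rintro ⟨hz, ε, hε, h⟩
    refine ⟨⟨z, hz⟩, ?_, rfl⟩
    rw [mem_interior_iff_mem_nhds, Metric.mem_nhds_iff]
    refine ⟨ε, hε, fun q hq => h q q.2 ?_⟩
    simpa [Metric.mem_ball, Subtype.dist_eq] using hq

lemma seg_mem {C : Set E} (hC : Convex ℝ C) {w p : E}
    (hw : w ∈ intrinsicInterior ℝ C) (hp : p ∈ C) {θ : ℝ} (hθ0 : 0 ≤ θ) (hθ1 : θ < 1) :
    w + θ • (p - w) ∈ intrinsicInterior ℝ C := by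
  rw [mem_ri_iff] at hw ⊢
  obtain ⟨hwS, ε, hε, hball⟩ := hw
  have hpS : p ∈ affineSpan ℝ C := subset_affineSpan ℝ C hp
  have hzS : w + θ • (p - w) ∈ affineSpan ℝ C := by
    have := AffineSubspace.smul_vsub_vadd_mem (affineSpan ℝ C) θ hpS hwS hwS
    simpa [vsub_eq_sub, vadd_eq_add, add_comm] using this
  have h1θ : (0:ℝ) < 1 - θ := by linarith
  refine ⟨hzS, (1-θ)*ε, by positivity, fun q hq hdist => ?_⟩
  set z := w + θ • (p - w) with hz
  set w' := w + (1-θ)⁻¹ • (q - z) with hw'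
  have hw'S : w' ∈ affineSpan ℝ C := by
    have := AffineSubspace.smul_vsub_vadd_mem (affineSpan ℝ C) (1-θ)⁻¹ hq hzS hwS
    simpa [vsub_eq_sub, vadd_eq_add, add_comm] using this
  have hw'C : w' ∈ C := by
    refine hball w' hw'S ?_
    have : dist w' w = (1-θ)⁻¹ * dist q z := by
      rw [dist_eq_norm, dist_eq_norm, hw', add_sub_cancel_left, norm_smul,
        Real.norm_eq_abs, abs_of_pos (inv_pos.2 h1θ)]
    rw [this]
    calc (1-θ)⁻¹ * dist q z < (1-θ)⁻¹ * ((1-θ)*ε) := by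
          apply mul_lt_mul_of_pos_left hdist (inv_pos.2 h1θ)
      _ = ε := by field_simp
  have hqe : q = (1-θ) • w' + θ • p := by
    rw [hw', hz]
    match_scalars <;> (field_simp; try ring)
  rw [hqe]
  exact hC hw'C hp (le_of_lt h1θ) hθ0 (by ring)

lemma riChar [FiniteDimensional ℝ E] {C : Set E} (hC : Convex ℝ C) {z : E} :
    z ∈ intrinsicInterior ℝ C ↔ z ∈ C ∧ ∀ y ∈ C, ∃ t : ℝ, 1 < t ∧ y + t • (z - y) ∈ C := by
  constructor
  · intro hz
    have hzC := intrinsicInterior_subset hz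
    refine ⟨hzC, fun y hy => ?_⟩
    rw [mem_ri_iff] at hz
    obtain ⟨hzS, ε, hε, hball⟩ := hz
    have hyS : y ∈ affineSpan ℝ C := subset_affineSpan ℝ C hy
    set t : ℝ := 1 + ε / (2 * (‖z - y‖ + 1)) with ht
    have hnorm : (0:ℝ) ≤ ‖z - y‖ := norm_nonneg _
    have ht1 : 1 < t := by
      rw [ht]; have : 0 < ε / (2 * (‖z - y‖ + 1)) := by positivity
      linarith
    refine ⟨t, ht1, hball _ ?_ ?_⟩
    · have := AffineSubspace.smul_vsub_vadd_mem (affineSpan ℝ C) t hzS hyS hyS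
      simpa [vsub_eq_sub, vadd_eq_add, add_comm] using this
    · have he : y + t • (z - y) - z = (t - 1) • (z - y) := by module
      rw [dist_eq_norm, he, norm_smul, Real.norm_eq_abs, abs_of_pos (by linarith : (0:ℝ) < t - 1)]
      have ht' : t - 1 = ε / (2 * (‖z - y‖ + 1)) := by rw [ht]; ring
      rw [ht']
      rw [div_mul_eq_mul_div, div_lt_iff₀ (by positivity)]
      nlinarith
  · rintro ⟨hzC, h⟩
    obtain ⟨w, hw⟩ := Set.Nonempty.intrinsicInterior hC ⟨z, hzC⟩
    obtain ⟨t, ht, hp⟩ := h w (intrinsicInterior_subset hw)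
    have ht0 : (0:ℝ) < t := by linarith
    have := seg_mem hC hw hp (θ := 1/t) (by positivity) (by rw [div_lt_one ht0]; linarith)
    have he : w + (1/t) • (w + t • (z - w) - w) = z := by
      match_scalars <;> (field_simp; try ring)
    rwa [he] at this

end RiChar

variable {n : ℕ} {f : EuclideanSpace ℝ (Fin n) → EReal} {x : EuclideanSpace ℝ (Fin n)} {r : ℝ}

lemma mem_subdiff_iff (hr : f x = (r : EReal)) {v : EuclideanSpace ℝ (Fin n)} :
    v ∈ subdiff f x ↔ ∀ (y : EuclideanSpace ℝ (Fin n)) (ρ : ℝ),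
      f y ≤ (ρ : EReal) → r + (inner ℝ v (y - x) : ℝ) ≤ ρ := by
  constructor
  · rintro ⟨-, -, h⟩ y ρ hρ
    have h3 := h y
    rw [hr, ← EReal.coe_add] at h3
    exact EReal.coe_le_coe_iff.1 (le_trans h3 hρ)
  · intro h
    refine ⟨by simp [hr], by simp [hr], fun y => ?_⟩
    rw [hr, ← EReal.coe_add]
    by_cases htop : f y = ⊤
    · simp [htop]
    by_cases hbot : f y = ⊥
    · exfalso
      have := h y (r + (inner ℝ v (y - x) : ℝ) - 1) (by rw [hbot]; exact bot_le)
      linarith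
    · have heq : f y = ((f y).toReal : EReal) := (EReal.coe_toReal htop hbot).symm
      rw [heq]
      exact EReal.coe_le_coe_iff.2 (h y _ (le_of_eq heq))

lemma key1 (hr : f x = (r : EReal)) {v : EuclideanSpace ℝ (Fin n)} :
    v ∈ subdiff f x ↔
      (v, (-1 : ℝ)) ∈ normalConeProd {p : EuclideanSpace ℝ (Fin n) × ℝ | f p.1 ≤ (p.2 : EReal)} (x, r) := by
  rw [mem_subdiff_iff hr]
  constructor
  · intro h q hq
    have := h q.1 q.2 hq
    simp only at this ⊢
    nlinarith [this]
  · intro h y ρ hρ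
    have := h (y, ρ) hρ
    simp only at this
    nlinarith [this]

lemma cone_smul {S : Set (EuclideanSpace ℝ (Fin n) × ℝ)} {p w : EuclideanSpace ℝ (Fin n) × ℝ}
    (hw : w ∈ normalConeProd S p) {c : ℝ} (hc : 0 ≤ c) : c • w ∈ normalConeProd S p := by
  intro q hq
  have := hw q hq
  simp only [Prod.smul_fst, Prod.smul_snd, real_inner_smul_left, smul_eq_mul]
  nlinarith

lemma convex_normalCone {S : Set (EuclideanSpace ℝ (Fin n) × ℝ)} {p : EuclideanSpace ℝ (Fin n) × ℝ} :
    Convex ℝ (normalConeProd S p) := by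
  intro w1 h1 w2 h2 a b ha hb hab q hq
  have H1 := h1 q hq
  have H2 := h2 q hq
  simp only [Prod.fst_add, Prod.snd_add, Prod.smul_fst, Prod.smul_snd, inner_add_left,
    real_inner_smul_left, smul_eq_mul]
  nlinarith

lemma convex_subdiff (hr : f x = (r : EReal)) : Convex ℝ (subdiff f x) := by
  intro v1 h1 v2 h2 a b ha hb hab
  rw [mem_subdiff_iff hr] at h1 h2 ⊢
  intro y ρ hρ
  have H1 := h1 y ρ hρ
  have H2 := h2 y ρ hρ
  rw [inner_add_left, real_inner_smul_left, real_inner_smul_left]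
  have hrr : a * r + b * r = r := by rw [← add_mul, hab, one_mul]
  have hrp : a * ρ + b * ρ = ρ := by rw [← add_mul, hab, one_mul]
  nlinarith [mul_le_mul_of_nonneg_left H1 ha, mul_le_mul_of_nonneg_left H2 hb]

lemma snd_nonpos (hr : f x = (r : EReal)) {w : EuclideanSpace ℝ (Fin n) × ℝ}
    (hw : w ∈ normalConeProd {p : EuclideanSpace ℝ (Fin n) × ℝ | f p.1 ≤ (p.2 : EReal)} (x, r)) :
    w.2 ≤ 0 := by
  have := hw (x, r + 1) (show f x ≤ ((r+1 : ℝ) : EReal) by rw [hr]; exact EReal.coe_le_coe_iff.2 (by linarith))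
  simp only [sub_self, inner_zero_right] at this
  nlinarith

lemma recession (hr : f x = (r : EReal)) {u : EuclideanSpace ℝ (Fin n)}
    (hu : (u, (0 : ℝ)) ∈ normalConeProd {p : EuclideanSpace ℝ (Fin n) × ℝ | f p.1 ≤ (p.2 : EReal)} (x, r))
    {v : EuclideanSpace ℝ (Fin n)} (hv : v ∈ subdiff f x) {l : ℝ} (hl : 0 ≤ l) :
    v + l • u ∈ subdiff f x := by
  rw [mem_subdiff_iff hr] at hv ⊢
  intro y ρ hρ
  have h1 := hv y ρ hρ
  have h2 := hu (y, ρ) hρ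
  simp only [zero_mul, add_zero] at h2
  rw [inner_add_left, real_inner_smul_left]
  nlinarith

/-- For a convex `f : ℝⁿ → ℝ ∪ {±∞}`, finite at `x` with value `r` and with `∂f(x) ≠ ∅`,
the relative interior of `∂f(x)` equals `{v | (v, -1) ∈ ri N_{epi f}(x, f x)}`. -/
theorem stmt4 {n : ℕ} (f : EuclideanSpace ℝ (Fin n) → EReal)
    (hconv : Convex ℝ {p : EuclideanSpace ℝ (Fin n) × ℝ | f p.1 ≤ (p.2 : EReal)})
    (x : EuclideanSpace ℝ (Fin n)) (r : ℝ) (hr : f x = (r : EReal))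
    (hne : (subdiff f x).Nonempty) :
    intrinsicInterior ℝ (subdiff f x) =
      {v : EuclideanSpace ℝ (Fin n) | (v, (-1 : ℝ)) ∈ intrinsicInterior ℝ
        (normalConeProd {p : EuclideanSpace ℝ (Fin n) × ℝ | f p.1 ≤ (p.2 : EReal)} (x, r))} := by
  have hDconv := convex_subdiff hr
  have hKconv : Convex ℝ (normalConeProd {p : EuclideanSpace ℝ (Fin n) × ℝ | f p.1 ≤ (p.2 : EReal)} (x, r)) :=
    convex_normalCone
  ext v
  simp only [mem_setOf_eq]
  rw [riChar hDconv, riChar hKconv]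
  constructor
  · rintro ⟨hvD, hPro⟩
    refine ⟨(key1 hr).1 hvD, ?_⟩
    rintro ⟨u, s⟩ hw
    have hs : s ≤ 0 := snd_nonpos hr hw
    rcases eq_or_lt_of_le hs with hs0 | hsneg
    · -- horizontal case s = 0
      subst hs0
      have hy1 : v + (1:ℝ) • u ∈ subdiff f x := recession hr hw hvD zero_le_one
      rw [one_smul] at hy1
      obtain ⟨t₀, ht₀, hP⟩ := hPro (v + u) hy1
      have ht₀0 : (0:ℝ) < t₀ := by linarith
      have ht₀' : t₀ ≠ 0 := ne_of_gt ht₀0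
      have he : (v + u) + t₀ • (v - (v + u)) = v + (1 - t₀) • u := by module
      rw [he] at hP
      obtain ⟨θ, hθ⟩ : ∃ θ : ℝ, θ = 1/t₀ := ⟨_, rfl⟩
      have hθt : t₀ * θ = 1 := by rw [hθ]; field_simp
      have hθ0 : 0 ≤ θ := by rw [hθ]; positivity
      have hθ1 : 0 ≤ 1 - θ := by rw [hθ]; rw [sub_nonneg, div_le_one ht₀0]; linarith
      have hdD := hDconv hvD hP hθ1 hθ0 (by ring)
      refine ⟨t₀, ht₀, ?_⟩
      have hdK := (key1 hr).1 hdD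
      have hmem := cone_smul hdK (le_of_lt ht₀0)
      have heq : ((u, (0:ℝ)) : EuclideanSpace ℝ (Fin n) × ℝ) + t₀ • ((v, (-1:ℝ)) - (u, 0)) =
          t₀ • (((1 - θ) • v + θ • (v + (1 - t₀) • u) : EuclideanSpace ℝ (Fin n)), (-1:ℝ)) := by
        rw [Prod.mk_sub_mk, Prod.smul_mk, Prod.mk_add_mk, Prod.smul_mk, Prod.mk.injEq,
          smul_eq_mul, smul_eq_mul]
        constructor
        · match_scalars
          · linear_combination (t₀ - 1) * hθt
          · ring
        · ring
      rwa [heq]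
    · -- case s < 0
      have ha : (0:ℝ) < -s := by linarith
      have ha' : (-s) ≠ 0 := ne_of_gt ha
      have hs' : s ≠ 0 := ne_of_lt hsneg
      obtain ⟨y, hy⟩ : ∃ y : EuclideanSpace ℝ (Fin n), y = (-s)⁻¹ • u := ⟨_, rfl⟩
      have hu : u = (-s) • y := by rw [hy, smul_inv_smul₀ ha']
      have hyK : (y, (-1:ℝ)) ∈
          normalConeProd {p : EuclideanSpace ℝ (Fin n) × ℝ | f p.1 ≤ (p.2 : EReal)} (x, r) := by
        have hmem := cone_smul hw (le_of_lt (inv_pos.2 ha))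
        have heq : (-s)⁻¹ • ((u, s) : EuclideanSpace ℝ (Fin n) × ℝ) = (y, (-1:ℝ)) := by
          rw [Prod.smul_mk, Prod.mk.injEq, smul_eq_mul]
          exact ⟨hy.symm, by field_simp⟩
        rwa [heq] at hmem
      have hyD := (key1 hr).2 hyK
      obtain ⟨t₀, ht₀, hP⟩ := hPro y hyD
      have ht₀0 : (0:ℝ) < t₀ := by linarith
      have ht₀' : t₀ ≠ 0 := ne_of_gt ht₀0
      obtain ⟨ε, hε⟩ : ∃ ε : ℝ, ε = (t₀ - 1)/(t₀ * (-s)) := ⟨_, rfl⟩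
      have hεpos : 0 < ε := by rw [hε]; exact div_pos (by linarith) (by positivity)
      obtain ⟨t, ht⟩ : ∃ t : ℝ, t = 1 + ε := ⟨_, rfl⟩
      have ht1 : 1 < t := by rw [ht]; linarith
      have htpos : (0:ℝ) < t := by linarith
      obtain ⟨β, hβ⟩ : ∃ β : ℝ, β = t - (t - 1) * (-s) := ⟨_, rfl⟩
      have hεs : ε * (-s) = (t₀ - 1)/t₀ := by rw [hε]; field_simp
      have hfrac : (t₀ - 1)/t₀ < 1 := (div_lt_one ht₀0).2 (by linarith)
      have hβ2 : β = 1 + ε - (t₀ - 1)/t₀ := by rw [hβ, ht, ← hεs]; ring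
      have hβpos : 0 < β := by rw [hβ2]; linarith
      have hβ0 : β ≠ 0 := ne_of_gt hβpos
      have hfrac2 : (t₀ - 1)/t₀ * t₀ = t₀ - 1 := by field_simp
      have htβ : t ≤ β * t₀ := by
        rw [hβ2, ht]
        nlinarith [hεpos]
      obtain ⟨θ, hθ⟩ : ∃ θ : ℝ, θ = t/(β * t₀) := ⟨_, rfl⟩
      have hθt : β * θ * t₀ = t := by rw [hθ]; field_simp
      have hθ0 : 0 ≤ θ := by rw [hθ]; positivity
      have hθ1 : 0 ≤ 1 - θ := by
        rw [hθ, sub_nonneg, div_le_one (by positivity)]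
        exact htβ
      have hdD := hDconv hyD hP hθ1 hθ0 (by ring)
      refine ⟨t, ht1, ?_⟩
      have hdK := (key1 hr).1 hdD
      have hmem := cone_smul hdK (le_of_lt hβpos)
      have heq : ((u, s) : EuclideanSpace ℝ (Fin n) × ℝ) + t • ((v, (-1:ℝ)) - (u, s)) =
          β • (((1 - θ) • y + θ • (y + t₀ • (v - y)) : EuclideanSpace ℝ (Fin n)), (-1:ℝ)) := by
        rw [Prod.mk_sub_mk, Prod.smul_mk, Prod.mk_add_mk, Prod.smul_mk, Prod.mk.injEq,
          smul_eq_mul, smul_eq_mul]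
        constructor
        · rw [hu]
          match_scalars
          · linear_combination hθt - hβ
          · linear_combination -hθt
        · linear_combination hβ
      rwa [heq]
  · rintro ⟨hvK, hPro⟩
    refine ⟨(key1 hr).2 hvK, ?_⟩
    intro y hy
    obtain ⟨t, ht, hP⟩ := hPro (y, (-1:ℝ)) ((key1 hr).1 hy)
    have heq : ((y, (-1:ℝ)) : EuclideanSpace ℝ (Fin n) × ℝ) + t • ((v, (-1:ℝ)) - (y, (-1:ℝ))) =
        (y + t • (v - y), (-1:ℝ)) := by
      rw [Prod.mk_sub_mk, Prod.smul_mk, Prod.mk_add_mk, Prod.mk.injEq]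
      exact ⟨rfl, by simp⟩
    rw [heq] at hP
    exact ⟨t, ht, (key1 hr).2 hP⟩
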